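/- arXiv:2005.12738 — 3 statements merged into one kernel-verified Lean document; each statement's English description precedes it below -/
import Mathlib

section
/- For ℓ ≥ 2, m ∈ ℕ, and positive reals ζ₁,…,ζ_ℓ with ζ_ℓ ≠ 1, one has Ξ_ℓ^m(ζ₁,…,ζ_ℓ) = (1/(1-ζ_ℓ))·Ξ_{ℓ-1}^m(ζ₁,…,ζ_{ℓ-1}) - (ζ_ℓ^{m+1}/(1-ζ_ℓ))·Ξ_{ℓ-1}^m(ζ₁/ζ_ℓ,…,ζ_{ℓ-1}/ζ_ℓ). -/
/-- `Ξ_ℓ^m(ζ₁,…,ζ_ℓ) = Σ_{η₁=0}^m Σ_{η₂=0}^{m-η₁} ⋯ Σ_{η_ℓ=0}^{m-η₁-⋯-η_{ℓ-1}}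
ζ₁^{η₁} ⋯ ζ_ℓ^{η_ℓ}`, i.e. the sum of `ζ₁^{η₁} ⋯ ζ_ℓ^{η_ℓ}` over all tuples of
nonnegative integers `η` with `η₁ + ⋯ + η_ℓ ≤ m`. -/
noncomputable def Xi (l m : ℕ) (ζ : Fin l → ℝ) : ℝ :=
  ∑ s ∈ Finset.range (m + 1), ∑ η ∈ Finset.Nat.antidiagonalTuple l s, ∏ i, ζ i ^ η i

open Finset

/-- Splitting off the last coordinate in a sum over tuples with bounded total sum. -/
lemma Xi_key (l m : ℕ) (f : (Fin (l+1) → ℕ) → ℝ) :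
    ∑ s ∈ range (m+1), ∑ η ∈ Finset.Nat.antidiagonalTuple (l+1) s, f η
      = ∑ a ∈ range (m+1), ∑ η ∈ Finset.Nat.antidiagonalTuple l a,
          ∑ b ∈ range (m+1-a), f (Fin.snoc η b) := by
  rw [Finset.sum_sigma' (range (m+1)) (fun s => Finset.Nat.antidiagonalTuple (l+1) s)
      (fun _ η => f η)]
  rw [show (∑ a ∈ range (m+1), ∑ η ∈ Finset.Nat.antidiagonalTuple l a,
      ∑ b ∈ range (m+1-a), f (Fin.snoc η b))
    = ∑ q ∈ (range (m+1)).sigma (fun a => (Finset.Nat.antidiagonalTuple l a) ×ˢ range (m+1-a)),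
        f (Fin.snoc q.2.1 q.2.2) by
    rw [Finset.sum_sigma]
    exact Finset.sum_congr rfl fun a _ => by rw [Finset.sum_product]]
  refine Finset.sum_nbij' (i := fun p => ⟨∑ j, Fin.init p.2 j, (Fin.init p.2, p.2 (Fin.last l))⟩)
    (j := fun q => ⟨q.1 + q.2.2, Fin.snoc q.2.1 q.2.2⟩) ?_ ?_ ?_ ?_ ?_
  · rintro ⟨s, η⟩ hp
    dsimp only
    simp only [Finset.mem_sigma, Finset.mem_range, Finset.Nat.mem_antidiagonalTuple,
      Finset.mem_product, Fin.init] at hp ⊢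
    obtain ⟨hs, hsum⟩ := hp
    rw [Fin.sum_univ_castSucc] at hsum
    exact ⟨by omega, trivial, by omega⟩
  · rintro ⟨a, η, b⟩ hq
    dsimp only
    simp only [Finset.mem_sigma, Finset.mem_range, Finset.Nat.mem_antidiagonalTuple,
      Finset.mem_product] at hq ⊢
    obtain ⟨ha, hsum, hb⟩ := hq
    rw [Fin.sum_univ_castSucc]
    simp only [Fin.snoc_castSucc, Fin.snoc_last, hsum]
    exact ⟨by omega, trivial⟩
  · rintro ⟨s, η⟩ hp
    dsimp only
    simp only [Finset.mem_sigma, Finset.mem_range, Finset.Nat.mem_antidiagonalTuple] at hp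
    obtain ⟨hs, hsum⟩ := hp
    rw [Fin.sum_univ_castSucc] at hsum
    refine Sigma.ext ?_ (heq_of_eq ?_)
    · dsimp only
      simp only [Fin.init]
      simpa using hsum
    · exact Fin.snoc_init_self η
  · rintro ⟨a, η, b⟩ hq
    dsimp only
    simp only [Finset.mem_sigma, Finset.mem_range, Finset.Nat.mem_antidiagonalTuple,
      Finset.mem_product] at hq
    obtain ⟨ha, hsum, hb⟩ := hq
    refine Sigma.ext ?_ (heq_of_eq ?_)
    · dsimp only
      simp only [Fin.init_snoc, hsum, Fin.snoc_last]
    · simp only [Fin.init_snoc, Fin.snoc_last]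
  · rintro ⟨s, η⟩ hp
    dsimp only
    simp [Fin.snoc_init_self]

set_option maxHeartbeats 1000000 in
/-- For `ℓ ≥ 2`, `m ∈ ℕ`, and positive reals `ζ₁,…,ζ_ℓ` with `ζ_ℓ ≠ 1`, one has
`Ξ_ℓ^m(ζ₁,…,ζ_ℓ) = (1/(1-ζ_ℓ))·Ξ_{ℓ-1}^m(ζ₁,…,ζ_{ℓ-1})
  - (ζ_ℓ^{m+1}/(1-ζ_ℓ))·Ξ_{ℓ-1}^m(ζ₁/ζ_ℓ,…,ζ_{ℓ-1}/ζ_ℓ)`.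
Here `ℓ = l + 1` with `l ≥ 1`. -/
theorem Xi_recursion (l m : ℕ) (hl : 1 ≤ l) (ζ : Fin (l + 1) → ℝ)
    (hpos : ∀ i, 0 < ζ i) (hne : ζ (Fin.last l) ≠ 1) :
    Xi (l + 1) m ζ
      = (1 / (1 - ζ (Fin.last l))) * Xi l m (fun i => ζ i.castSucc)
        - (ζ (Fin.last l) ^ (m + 1) / (1 - ζ (Fin.last l))) *
            Xi l m (fun i => ζ i.castSucc / ζ (Fin.last l)) := by
  set z := ζ (Fin.last l) with hzdef
  have hz0 : (0:ℝ) < z := hpos _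
  have hz1 : (1:ℝ) - z ≠ 0 := sub_ne_zero_of_ne (Ne.symm hne)
  unfold Xi
  rw [Xi_key l m (fun η => ∏ i, ζ i ^ η i)]
  have step1 : ∀ a ∈ range (m+1), ∀ η ∈ Finset.Nat.antidiagonalTuple l a,
      (∑ b ∈ range (m+1-a), ∏ i, ζ i ^ (Fin.snoc η b i))
        = (∏ i : Fin l, ζ i.castSucc ^ η i) * ((1 - z^(m+1-a))/(1-z)) := by
    intro a ha η hη
    have hb : ∀ b, ∏ i, ζ i ^ (Fin.snoc η b i)
        = (∏ i : Fin l, ζ i.castSucc ^ η i) * z ^ b := by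
      intro b
      rw [Fin.prod_univ_castSucc]
      simp [Fin.snoc_castSucc, Fin.snoc_last]
      exact Or.inl rfl
    simp_rw [hb]
    rw [← Finset.mul_sum, geom_sum_eq hne]
    rw [← neg_div_neg_eq, neg_sub, neg_sub]
  calc ∑ a ∈ range (m+1), ∑ η ∈ Finset.Nat.antidiagonalTuple l a,
        ∑ b ∈ range (m+1-a), ∏ i, ζ i ^ (Fin.snoc η b i)
      = ∑ a ∈ range (m+1), ∑ η ∈ Finset.Nat.antidiagonalTuple l a,
        (∏ i : Fin l, ζ i.castSucc ^ η i) * ((1 - z^(m+1-a))/(1-z)) :=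
        Finset.sum_congr rfl fun a ha => Finset.sum_congr rfl fun η hη => step1 a ha η hη
    _ = ∑ a ∈ range (m+1),
        ((1/(1-z)) * ∑ η ∈ Finset.Nat.antidiagonalTuple l a, ∏ i : Fin l, ζ i.castSucc ^ η i
          - (z^(m+1)/(1-z)) * ∑ η ∈ Finset.Nat.antidiagonalTuple l a,
              ∏ i : Fin l, (ζ i.castSucc / z) ^ η i) := by
        refine Finset.sum_congr rfl fun a ha => ?_
        rw [Finset.mem_range] at ha
        have hdiv : ∀ η ∈ Finset.Nat.antidiagonalTuple l a,
            ∏ i : Fin l, (ζ i.castSucc / z) ^ η i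
              = (∏ i : Fin l, ζ i.castSucc ^ η i) / z ^ a := by
          intro η hη
          rw [Finset.Nat.mem_antidiagonalTuple] at hη
          simp_rw [div_pow]
          rw [Finset.prod_div_distrib, Finset.prod_pow_eq_pow_sum, hη]
        rw [Finset.sum_congr rfl hdiv, Finset.mul_sum, Finset.mul_sum,
          ← Finset.sum_sub_distrib]
        refine Finset.sum_congr rfl fun η hη => ?_
        rw [pow_sub₀ z hz0.ne' (show a ≤ m+1 by omega)]
        field_simp
    _ = _ := by
        rw [Finset.sum_sub_distrib, ← Finset.mul_sum, ← Finset.mul_sum]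
end

section
/- Let Q be a lower triangular matrix with diagonal entries ρ₁,…,ρ_k ∈ (0,1). For indices i > j such that there is an admissible path from i to j (a strictly decreasing sequence i = θ₁ > θ₂ > ⋯ > θ_κ = j with Q_{θ_u θ_{u+1}} ≠ 0 for all u), the entry (Qⁿ)_{ij} is the sum over all such admissible paths θ of Q_{θ₁θ₂}⋯Q_{θ_{κ-1}θ_κ} · Σ_{η∈ℕ₀^κ, Ση = n+1-κ} ρ_{θ₁}^{η₁}⋯ρ_{θ_κ}^{η_κ}. -/
/-- The elements of a finset listed in (strictly) decreasing order. -/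
def descList {k : ℕ} (S : Finset (Fin k)) : List (Fin k) :=
  (S.sort (· ≤ ·)).reverse

namespace PathAux

variable {k : ℕ}

lemma descList_length (S : Finset (Fin k)) : (descList S).length = S.card := by
  simp [descList]

lemma descList_singleton (a : Fin k) : descList ({a} : Finset (Fin k)) = [a] := by
  simp [descList]

lemma sort_insert_max {a : Fin k} {S : Finset (Fin k)} (h₁ : ∀ b ∈ S, b ≤ a) (h₂ : a ∉ S) :
    (insert a S).sort (· ≤ ·) = S.sort (· ≤ ·) ++ [a] := by
  refine (fun hp hs => List.Perm.eq_of_pairwise' (Finset.pairwise_sort _ _) hs hp) ?_ ?_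
  · rw [← Multiset.coe_eq_coe]
    push_cast [Finset.sort_eq]
    rw [Finset.insert_val_of_notMem h₂]
    rw [← Multiset.coe_add, Finset.sort_eq, Multiset.coe_singleton, add_comm,
      ← Multiset.singleton_add, Multiset.singleton_add]
  · rw [List.pairwise_append]
    refine ⟨Finset.pairwise_sort _ _, List.pairwise_singleton _ a, ?_⟩
    intro x hx y hy
    simp only [List.mem_singleton] at hy
    subst hy
    exact h₁ x ((Finset.mem_sort _).mp hx)

lemma descList_insert_max {a : Fin k} {S : Finset (Fin k)} (h₁ : ∀ b ∈ S, b ≤ a) (h₂ : a ∉ S) :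
    descList (insert a S) = a :: descList S := by
  unfold descList
  rw [sort_insert_max h₁ h₂, List.reverse_append]
  rfl

lemma descList_cons_max {S : Finset (Fin k)} {m : Fin k} (hm : m ∈ S) (hmax : ∀ x ∈ S, x ≤ m) :
    descList S = m :: descList (S.erase m) := by
  conv_lhs => rw [← Finset.insert_erase hm]
  exact descList_insert_max (fun b hb => hmax b (Finset.mem_of_mem_erase hb))
    (Finset.notMem_erase m S)

lemma sum_adT_succ (m M : ℕ) (f : ℕ → (Fin m → ℕ) → ℝ) :
    ∑ η ∈ Finset.Nat.antidiagonalTuple (m + 1) M, f (η 0) (Fin.tail η)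
      = ∑ p ∈ Finset.HasAntidiagonal.antidiagonal M, ∑ t ∈ Finset.Nat.antidiagonalTuple m p.2, f p.1 t := by
  rw [← Finset.sum_sigma (Finset.HasAntidiagonal.antidiagonal M)
    (fun p => Finset.Nat.antidiagonalTuple m p.2) (fun q => f q.1.1 q.2)]
  refine Finset.sum_nbij' (fun η => ⟨(η 0, ∑ u, Fin.tail η u), Fin.tail η⟩)
    (fun q => Fin.cons q.1.1 q.2) ?_ ?_ ?_ ?_ ?_
  · intro η hη
    rw [Finset.Nat.mem_antidiagonalTuple] at hη
    simp only [Finset.mem_sigma, Finset.HasAntidiagonal.mem_antidiagonal, Finset.Nat.mem_antidiagonalTuple]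
    refine ⟨by rw [← hη, Fin.sum_univ_succ]; rfl, trivial⟩
  · intro q hq
    simp only [Finset.mem_sigma, Finset.HasAntidiagonal.mem_antidiagonal,
      Finset.Nat.mem_antidiagonalTuple] at hq ⊢
    rw [Fin.sum_univ_succ, Fin.cons_zero]
    simp only [Fin.cons_succ]
    rw [show ∑ u : Fin m, q.snd u = q.fst.2 from hq.2, hq.1]
  · intro η _
    simp [Fin.cons_self_tail]
  · intro q hq
    simp only [Finset.mem_sigma, Finset.HasAntidiagonal.mem_antidiagonal,
      Finset.Nat.mem_antidiagonalTuple] at hq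
    obtain ⟨⟨a, b⟩, t⟩ := q
    obtain ⟨-, h2⟩ := hq
    simp only at h2
    subst h2
    rfl
  · intro η _
    rfl

lemma adT_split (m N : ℕ) (ρ : Fin (m + 1) → ℝ) :
    ∑ η ∈ Finset.Nat.antidiagonalTuple (m + 1) (N + 1), ∏ u, ρ u ^ η u
      = ρ 0 * ∑ η ∈ Finset.Nat.antidiagonalTuple (m + 1) N, ∏ u, ρ u ^ η u
        + ∑ η ∈ Finset.Nat.antidiagonalTuple m (N + 1), ∏ u : Fin m, ρ u.succ ^ η u := by
  have key : ∀ M : ℕ, ∑ η ∈ Finset.Nat.antidiagonalTuple (m + 1) M, ∏ u, ρ u ^ η u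
      = ∑ p ∈ Finset.HasAntidiagonal.antidiagonal M,
          ∑ t ∈ Finset.Nat.antidiagonalTuple m p.2,
            ρ 0 ^ p.1 * ∏ u : Fin m, ρ u.succ ^ t u := by
    intro M
    rw [← sum_adT_succ m M (fun a t => ρ 0 ^ a * ∏ u : Fin m, ρ u.succ ^ t u)]
    refine Finset.sum_congr rfl fun η _ => ?_
    rw [Fin.prod_univ_succ]
    rfl
  rw [key (N + 1), key N, Finset.Nat.sum_antidiagonal_succ, add_comm]
  congr 1
  · rw [Finset.mul_sum]
    refine Finset.sum_congr rfl fun p _ => ?_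
    rw [Finset.mul_sum]
    refine Finset.sum_congr rfl fun t _ => ?_
    ring
  · simp

lemma inner_rec (m n : ℕ) (ρ : Fin (m + 1) → ℝ) :
    (if n + 1 + 1 < m + 1 then (0 : ℝ)
      else ∑ η ∈ Finset.Nat.antidiagonalTuple (m + 1) (n + 1 + 1 - (m + 1)), ∏ u, ρ u ^ η u)
    = ρ 0 * (if n + 1 < m + 1 then 0
        else ∑ η ∈ Finset.Nat.antidiagonalTuple (m + 1) (n + 1 - (m + 1)), ∏ u, ρ u ^ η u)
      + (if n + 1 < m then 0
        else ∑ η ∈ Finset.Nat.antidiagonalTuple m (n + 1 - m), ∏ u : Fin m, ρ u.succ ^ η u) := by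
  rcases lt_trichotomy (n + 1) m with hc | hc | hc
  · rw [if_pos (by omega), if_pos (by omega), if_pos (by omega)]
    ring
  · rw [if_neg (by omega), if_pos (by omega), if_neg (by omega)]
    have h1 : n + 1 + 1 - (m + 1) = 0 := by omega
    have h2 : n + 1 - m = 0 := by omega
    rw [h1, h2, Finset.Nat.antidiagonalTuple_zero_right, Finset.Nat.antidiagonalTuple_zero_right]
    simp
  · rw [if_neg (by omega), if_neg (by omega), if_neg (by omega)]
    have h1 : n + 1 + 1 - (m + 1) = (n - m) + 1 := by omega
    have h2 : n + 1 - (m + 1) = n - m := by omega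
    have h3 : n + 1 - m = (n - m) + 1 := by omega
    rw [h1, h2, h3]
    exact adT_split m (n - m) ρ

/-- The weight of a path, as a function of the list of its vertices. -/
def pw (Q : Matrix (Fin k) (Fin k) ℝ) (L : List (Fin k)) (n : ℕ) : ℝ :=
  ((L.zip L.tail).map (fun p => Q p.1 p.2)).prod *
    (if n + 1 < L.length then 0
     else ∑ η ∈ Finset.Nat.antidiagonalTuple L.length (n + 1 - L.length),
       ∏ u : Fin L.length, Q (L.get u) (L.get u) ^ η u)

variable (Q : Matrix (Fin k) (Fin k) ℝ)

lemma pw_singleton (a : Fin k) (n : ℕ) : pw Q [a] n = Q a a ^ n := by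
  simp [pw, Finset.Nat.antidiagonalTuple_one]

lemma pw_cons (i : Fin k) (L : List (Fin k)) (hL : L ≠ []) (n : ℕ) :
    pw Q (i :: L) (n + 1)
      = Q i i * pw Q (i :: L) n + Q i (L.head hL) * pw Q L n := by
  obtain ⟨a, L', rfl⟩ : ∃ a L', L = a :: L' := ⟨L.head hL, L.tail, (List.cons_head_tail hL).symm⟩
  have key := inner_rec (a :: L').length n
    (fun u => Q ((i :: a :: L').get u) ((i :: a :: L').get u))
  have hzip : (((i :: a :: L').zip ((i :: a :: L').tail)).map (fun p => Q p.1 p.2)).prod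
      = Q i a * (((a :: L').zip ((a :: L').tail)).map (fun p => Q p.1 p.2)).prod := by
    simp [List.zip]
  have main : ∀ I1 I2 I3 c : ℝ, I1 = Q i i * I2 + I3 →
      (Q i a * c) * I1 = Q i i * ((Q i a * c) * I2) + Q i a * (c * I3) := by
    intro I1 I2 I3 c h
    rw [h]; ring
  unfold pw
  simp only [List.head_cons]
  rw [hzip]
  refine main _ _ _ _ ?_
  exact key

open Classical in
/-- The finset of admissible paths from `i` to `j`. -/
noncomputable def Fs (i j : Fin k) : Finset (Finset (Fin k)) :=
  Finset.univ.filter (fun S : Finset (Fin k) =>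
    i ∈ S ∧ j ∈ S ∧ (∀ x ∈ S, j ≤ x ∧ x ≤ i) ∧
    List.Chain' (fun a b => Q a b ≠ 0) (descList S))

lemma mem_Fs {i j : Fin k} {S : Finset (Fin k)} :
    S ∈ Fs Q i j ↔ i ∈ S ∧ j ∈ S ∧ (∀ x ∈ S, j ≤ x ∧ x ≤ i) ∧
      List.Chain' (fun a b => Q a b ≠ 0) (descList S) := by
  simp [Fs]

lemma Fs_self (i : Fin k) : Fs Q i i = {{i}} := by
  ext S
  rw [mem_Fs, Finset.mem_singleton]
  constructor
  · rintro ⟨hi, -, hb, -⟩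
    exact Finset.eq_singleton_iff_unique_mem.mpr
      ⟨hi, fun x hx => le_antisymm (hb x hx).2 (hb x hx).1⟩
  · rintro rfl
    refine ⟨Finset.mem_singleton_self i, Finset.mem_singleton_self i, ?_, ?_⟩
    · intro x hx
      rw [Finset.mem_singleton] at hx
      subst hx
      exact ⟨le_rfl, le_rfl⟩
    · rw [descList_singleton]
      exact List.isChain_singleton _

lemma Fs_empty_of_lt {l j : Fin k} (h : l < j) : Fs Q l j = ∅ := by
  rw [Finset.eq_empty_iff_forall_notMem]
  intro S hS
  rw [mem_Fs] at hS
  exact absurd ((hS.2.2.1 j hS.2.1).2) (not_le.mpr h)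

theorem main (htri : ∀ i j : Fin k, i < j → Q i j = 0) (n : ℕ) :
    ∀ i j : Fin k, (Q ^ n) i j = ∑ S ∈ Fs Q i j, pw Q (descList S) n := by
  induction n with
  | zero =>
    intro i j
    rcases eq_or_ne i j with rfl | hij
    · rw [Fs_self, Finset.sum_singleton, descList_singleton, pw_singleton]
      simp [Matrix.one_apply_eq]
    · have h1 : (Q ^ 0) i j = 0 := by
        rw [pow_zero]
        exact Matrix.one_apply_ne hij
      rw [h1]
      symm
      apply Finset.sum_eq_zero
      intro S hS
      rw [mem_Fs Q] at hS
      obtain ⟨hi, hj, -, -⟩ := hS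
      have hcard : 1 < S.card := Finset.one_lt_card.mpr ⟨i, hi, j, hj, hij⟩
      unfold pw
      rw [if_pos (by rw [descList_length]; omega), mul_zero]
  | succ n ih =>
    intro i j
    have hmul : (Q ^ (n + 1)) i j = ∑ l, Q i l * (Q ^ n) l j := by
      rw [pow_succ', Matrix.mul_apply]
    rw [hmul]
    have hterm : ∀ l, Q i l * (Q ^ n) l j = Q i l * ∑ S ∈ Fs Q l j, pw Q (descList S) n := by
      intro l
      rw [ih l j]
    rw [Finset.sum_congr rfl fun l _ => hterm l]
    rcases lt_trichotomy i j with hlt | heq | hgt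
    · rw [Fs_empty_of_lt Q hlt, Finset.sum_empty]
      apply Finset.sum_eq_zero
      intro l _
      rcases le_or_gt l i with hle | hgt'
      · rw [Fs_empty_of_lt Q (lt_of_le_of_lt hle hlt), Finset.sum_empty, mul_zero]
      · rw [htri i l hgt', zero_mul]
    · subst heq
      rw [Fs_self, Finset.sum_singleton, descList_singleton, pw_singleton]
      rw [Finset.sum_eq_single i]
      · rw [Fs_self, Finset.sum_singleton, descList_singleton, pw_singleton, pow_succ']
      · intro l _ hli
        rcases lt_or_gt_of_ne hli with hl | hl
        · rw [Fs_empty_of_lt Q hl, Finset.sum_empty, mul_zero]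
        · rw [htri i l hl, zero_mul]
      · intro h
        exact absurd (Finset.mem_univ i) h
    · -- j < i
      haveI : Inhabited (Fin k) := ⟨i⟩
      -- rewrite each RHS term using pw_cons
      have hstep : ∀ T ∈ Fs Q i j, pw Q (descList T) (n + 1)
          = Q i i * pw Q (descList T) n
            + Q i ((descList (T.erase i)).headI) * pw Q (descList (T.erase i)) n := by
        intro T hT
        rw [mem_Fs Q] at hT
        obtain ⟨hiT, hjT, hb, -⟩ := hT
        have hdT : descList T = i :: descList (T.erase i) :=
          descList_cons_max hiT (fun x hx => (hb x hx).2)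
        have hjE : j ∈ T.erase i := Finset.mem_erase.mpr ⟨hgt.ne, hjT⟩
        have hEne : (T.erase i).Nonempty := ⟨j, hjE⟩
        have hl := (T.erase i).max'_mem hEne
        have hdE : descList (T.erase i)
            = (T.erase i).max' hEne :: descList ((T.erase i).erase ((T.erase i).max' hEne)) :=
          descList_cons_max hl (fun x hx => Finset.le_max' _ x hx)
        rw [hdT, hdE, List.headI_cons]
        exact pw_cons Q i _ (List.cons_ne_nil _ _) n
      rw [Finset.sum_congr rfl hstep, Finset.sum_add_distrib]
      rw [← Finset.add_sum_erase Finset.univ _ (Finset.mem_univ i)]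
      congr 1
      · rw [Finset.mul_sum]
      -- the off-diagonal part
      rw [Finset.sum_congr rfl (fun l _ => Finset.mul_sum (Fs Q l j) (fun S => pw Q (descList S) n) (Q i l))]
      rw [← Finset.sum_sigma (Finset.univ.erase i) (fun l => Fs Q l j)
        (fun p => Q i p.1 * pw Q (descList p.2) n)]
      rw [← Finset.sum_filter_of_ne
        (p := fun p : (_ : Fin k) × Finset (Fin k) => Q i p.1 ≠ 0)
        (fun p _ hne => by
          intro h0
          rw [h0, zero_mul] at hne
          exact hne rfl)]
      refine Finset.sum_nbij' (fun p => insert i p.2)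
        (fun T => ⟨(descList (T.erase i)).headI, T.erase i⟩) ?_ ?_ ?_ ?_ ?_
      · -- forward membership
        rintro ⟨l, S⟩ hp
        simp only [Finset.mem_filter, Finset.mem_sigma, Finset.mem_erase, Finset.mem_univ,
          and_true, true_and] at hp
        obtain ⟨⟨hli, hS⟩, hQil⟩ := hp
        rw [mem_Fs Q] at hS
        obtain ⟨hlS, hjS, hb, hch⟩ := hS
        have hlei : l < i := lt_of_le_of_ne (not_lt.mp fun h => hQil (htri i l h)) hli
        have hnotiS : i ∉ S := fun h => absurd (hb i h).2 (not_le.mpr hlei)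
        have hdS : descList S = l :: descList (S.erase l) :=
          descList_cons_max hlS (fun x hx => (hb x hx).2)
        have hdins : descList (insert i S) = i :: descList S :=
          descList_insert_max (fun b hb' => le_of_lt (lt_of_le_of_lt (hb b hb').2 hlei)) hnotiS
        rw [mem_Fs Q]
        refine ⟨Finset.mem_insert_self i S, Finset.mem_insert_of_mem hjS, ?_, ?_⟩
        · intro x hx
          rcases Finset.mem_insert.mp hx with rfl | hx'
          · exact ⟨le_of_lt hgt, le_rfl⟩
          · exact ⟨(hb x hx').1, le_of_lt (lt_of_le_of_lt (hb x hx').2 hlei)⟩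
        · rw [hdins, hdS, show ∀ R (l : List (Fin k)), List.Chain' R l = List.IsChain R l from fun _ _ => rfl, List.isChain_cons_cons, ← hdS]
          exact ⟨hQil, hch⟩
      · -- backward membership
        intro T hT
        rw [mem_Fs Q] at hT
        obtain ⟨hiT, hjT, hb, hch⟩ := hT
        have hdT : descList T = i :: descList (T.erase i) :=
          descList_cons_max hiT (fun x hx => (hb x hx).2)
        have hjE : j ∈ T.erase i := Finset.mem_erase.mpr ⟨hgt.ne, hjT⟩
        have hEne : (T.erase i).Nonempty := ⟨j, hjE⟩
        set l := (T.erase i).max' hEne with hldef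
        have hlmem := (T.erase i).max'_mem hEne
        have hdE : descList (T.erase i) = l :: descList ((T.erase i).erase l) :=
          descList_cons_max hlmem (fun x hx => Finset.le_max' _ x hx)
        have hheadI : (descList (T.erase i)).headI = l := by rw [hdE, List.headI_cons]
        have hchain : Q i l ≠ 0 ∧ List.Chain' (fun a b => Q a b ≠ 0) (descList (T.erase i)) := by
          rw [hdT, hdE, show ∀ R (l : List (Fin k)), List.Chain' R l = List.IsChain R l from fun _ _ => rfl, List.isChain_cons_cons] at hch
          exact ⟨hch.1, by rw [hdE]; exact hch.2⟩
        simp only [Finset.mem_filter, Finset.mem_sigma, Finset.mem_erase, Finset.mem_univ,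
          and_true, true_and]
        refine ⟨⟨?_, ?_⟩, ?_⟩
        · rw [hheadI]
          exact (Finset.mem_erase.mp hlmem).1
        · rw [hheadI, mem_Fs Q]
          refine ⟨hlmem, hjE, ?_, hchain.2⟩
          intro x hx
          exact ⟨(hb x (Finset.mem_of_mem_erase hx)).1, Finset.le_max' _ x hx⟩
        · rw [hheadI]
          exact hchain.1
      · -- left inverse
        rintro ⟨l, S⟩ hp
        simp only [Finset.mem_filter, Finset.mem_sigma, Finset.mem_erase, Finset.mem_univ,
          and_true, true_and] at hp
        obtain ⟨⟨hli, hS⟩, hQil⟩ := hp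
        rw [mem_Fs Q] at hS
        obtain ⟨hlS, hjS, hb, -⟩ := hS
        have hlei : l < i := lt_of_le_of_ne (not_lt.mp fun h => hQil (htri i l h)) hli
        have hnotiS : i ∉ S := fun h => absurd (hb i h).2 (not_le.mpr hlei)
        have herase : (insert i S).erase i = S := Finset.erase_insert hnotiS
        have hdS : descList S = l :: descList (S.erase l) :=
          descList_cons_max hlS (fun x hx => (hb x hx).2)
        simp only [herase]
        rw [hdS, List.headI_cons]
      · -- right inverse
        intro T hT
        rw [mem_Fs Q] at hT
        exact Finset.insert_erase hT.1
      · -- values agree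
        rintro ⟨l, S⟩ hp
        simp only [Finset.mem_filter, Finset.mem_sigma, Finset.mem_erase, Finset.mem_univ,
          and_true, true_and] at hp
        obtain ⟨⟨hli, hS⟩, hQil⟩ := hp
        rw [mem_Fs Q] at hS
        obtain ⟨hlS, hjS, hb, -⟩ := hS
        have hlei : l < i := lt_of_le_of_ne (not_lt.mp fun h => hQil (htri i l h)) hli
        have hnotiS : i ∉ S := fun h => absurd (hb i h).2 (not_le.mpr hlei)
        have herase : (insert i S).erase i = S := Finset.erase_insert hnotiS
        have hdS : descList S = l :: descList (S.erase l) :=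
          descList_cons_max hlS (fun x hx => (hb x hx).2)
        simp only [herase]
        rw [hdS, List.headI_cons, ← hdS]

end PathAux

open Classical in
/-- Let `Q` be a lower triangular matrix with diagonal entries `ρ₁,…,ρ_k ∈ (0,1)`.
For indices `i > j` such that there is an admissible path from `i` to `j` (a
strictly decreasing sequence `i = θ₁ > θ₂ > ⋯ > θ_κ = j` with `Q_{θ_u θ_{u+1}} ≠ 0`
for all `u`), the entry `(Qⁿ)_{ij}` is the sum over all such admissible paths `θ`
(identified with the finsets `S` of their elements, listed decreasingly) of
`Q_{θ₁θ₂}⋯Q_{θ_{κ-1}θ_κ} · Σ_{η∈ℕ₀^κ, Ση = n+1-κ} ρ_{θ₁}^{η₁}⋯ρ_{θ_κ}^{η_κ}`,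
the inner sum being `0` when `n + 1 - κ < 0`. -/
theorem pow_entry_eq_admissible_path_sum (k : ℕ) (Q : Matrix (Fin k) (Fin k) ℝ)
    (htri : ∀ i j : Fin k, i < j → Q i j = 0)
    (hdiag : ∀ i, Q i i ∈ Set.Ioo (0 : ℝ) 1)
    (i j : Fin k) (hij : j < i)
    (hex : ∃ S : Finset (Fin k), i ∈ S ∧ j ∈ S ∧ (∀ x ∈ S, j ≤ x ∧ x ≤ i) ∧
      List.Chain' (fun a b => Q a b ≠ 0) (descList S))
    (n : ℕ) :
    (Q ^ n) i j =
      ∑ S ∈ Finset.univ.filter (fun S : Finset (Fin k) =>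
          i ∈ S ∧ j ∈ S ∧ (∀ x ∈ S, j ≤ x ∧ x ≤ i) ∧
          List.Chain' (fun a b => Q a b ≠ 0) (descList S)),
        (((descList S).zip (descList S).tail).map (fun p => Q p.1 p.2)).prod *
          (if n + 1 < (descList S).length then 0
           else ∑ η ∈ Finset.Nat.antidiagonalTuple (descList S).length
                  (n + 1 - (descList S).length),
                ∏ u : Fin (descList S).length,
                  Q ((descList S).get u) ((descList S).get u) ^ η u) := by
  exact PathAux.main Q htri n i j
end

section
/- Let 0 < ρ < 1 and let (X_i) be the Markov chain on {1,2,3} with lower triangular substochastic transition matrix Q having diagonal ρ, subdiagonal entries q₂₁ ≠ 0, q₃₂ ≠ 0, q₃₁ arbitrary. Then for every initial distribution π with π₃ > 0 and every ℓ ∈ {1,2,3}, the quasi-ergodic limit lim_{n→∞} E_π[(1/(n+1))·#{m ≤ n : X_m = ℓ} | T > n] = 1/3, where T is the absorption time. -/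
open MeasureTheory Filter

section QE

variable (ρ q₂₁ q₃₁ q₃₂ : ℝ) (π : Fin 3 → ℝ)

def qMat : Matrix (Fin 3) (Fin 3) ℝ := !![ρ, 0, 0; q₂₁, ρ, 0; q₃₁, q₃₂, ρ]

def wt (n : ℕ) (x : Fin (n + 1) → Fin 3) : ℝ :=
  π (x 0) * ∏ m : Fin n, qMat ρ q₂₁ q₃₁ q₃₂ (x m.castSucc) (x m.succ)

def cnt (ℓ : Fin 3) (n : ℕ) (x : Fin (n + 1) → Fin 3) : ℕ :=
  (Finset.univ.filter fun m => x m = ℓ).card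

def UU (n : ℕ) (i : Fin 3) : ℝ :=
  ∑ x : Fin (n + 1) → Fin 3, if x (Fin.last n) = i then wt ρ q₂₁ q₃₁ q₃₂ π n x else 0

def VV (ℓ : Fin 3) (n : ℕ) (i : Fin 3) : ℝ :=
  ∑ x : Fin (n + 1) → Fin 3,
    if x (Fin.last n) = i then (cnt ℓ n x : ℝ) * wt ρ q₂₁ q₃₁ q₃₂ π n x else 0

lemma sum_snoc_eq {β : Type*} [AddCommMonoid β] (n : ℕ) (g : (Fin (n + 2) → Fin 3) → β) :
    ∑ x : Fin (n + 2) → Fin 3, g x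
      = ∑ x : Fin (n + 1) → Fin 3, ∑ j : Fin 3, g (Fin.snoc x j) := by
  rw [← Equiv.sum_comp (Fin.snocEquiv (fun _ => Fin 3)) g, Fintype.sum_prod_type,
    Finset.sum_comm]
  rfl

lemma wt_snoc (n : ℕ) (x : Fin (n + 1) → Fin 3) (j : Fin 3) :
    wt ρ q₂₁ q₃₁ q₃₂ π (n + 1) (Fin.snoc x j)
      = wt ρ q₂₁ q₃₁ q₃₂ π n x * qMat ρ q₂₁ q₃₁ q₃₂ (x (Fin.last n)) j := by
  unfold wt
  rw [Fin.prod_univ_castSucc]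
  have h0 : (Fin.snoc x j : Fin (n + 2) → Fin 3) 0 = x 0 := by
    rw [← Fin.castSucc_zero, Fin.snoc_castSucc]
  rw [h0]
  have h1 : ∀ m : Fin n, m ∈ Finset.univ →
      qMat ρ q₂₁ q₃₁ q₃₂ ((Fin.snoc x j : Fin (n+2) → Fin 3) m.castSucc.castSucc)
        ((Fin.snoc x j : Fin (n+2) → Fin 3) m.castSucc.succ)
      = qMat ρ q₂₁ q₃₁ q₃₂ (x m.castSucc) (x m.succ) := by
    intro m _
    rw [Fin.succ_castSucc, Fin.snoc_castSucc, Fin.snoc_castSucc]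
  rw [Finset.prod_congr rfl h1]
  have h2 : (Fin.snoc x j : Fin (n+2) → Fin 3) (Fin.last n).castSucc = x (Fin.last n) :=
    Fin.snoc_castSucc ..
  have h3 : (Fin.snoc x j : Fin (n+2) → Fin 3) (Fin.last n).succ = j := by
    rw [Fin.succ_last]; exact Fin.snoc_last ..
  rw [h2, h3]; ring

lemma cnt_snoc (ℓ : Fin 3) (n : ℕ) (x : Fin (n + 1) → Fin 3) (j : Fin 3) :
    cnt ℓ (n + 1) (Fin.snoc x j) = cnt ℓ n x + if j = ℓ then 1 else 0 := by
  unfold cnt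
  rw [Finset.card_filter, Finset.card_filter, Fin.sum_univ_castSucc]
  congr 1
  · exact Finset.sum_congr rfl fun m _ => by rw [Fin.snoc_castSucc]
  · rw [Fin.snoc_last]

lemma sum_ite_last {β : Type*} [CommRing β] (n : ℕ) (g : (Fin (n + 1) → Fin 3) → β)
    (c : Fin 3 → β) :
    ∑ j : Fin 3, (∑ x : Fin (n + 1) → Fin 3, if x (Fin.last n) = j then g x else 0) * c j
      = ∑ x : Fin (n + 1) → Fin 3, g x * c (x (Fin.last n)) := by
  simp only [Finset.sum_mul, ite_mul, zero_mul]
  rw [Finset.sum_comm]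
  refine Finset.sum_congr rfl fun x _ => ?_
  rw [Finset.sum_ite_eq Finset.univ (x (Fin.last n)) (fun j => g x * c j)]
  simp

lemma sum_over_last {β : Type*} [AddCommMonoid β] (n : ℕ) (g : (Fin (n + 1) → Fin 3) → β) :
    ∑ i : Fin 3, (∑ x : Fin (n + 1) → Fin 3, if x (Fin.last n) = i then g x else 0)
      = ∑ x : Fin (n + 1) → Fin 3, g x := by
  rw [Finset.sum_comm]
  refine Finset.sum_congr rfl fun x _ => ?_
  rw [Finset.sum_ite_eq Finset.univ (x (Fin.last n)) (fun _ => g x)]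
  simp

lemma UU_zero (i : Fin 3) : UU ρ q₂₁ q₃₁ q₃₂ π 0 i = π i := by
  unfold UU wt
  rw [← Equiv.sum_comp (Equiv.funUnique (Fin 1) (Fin 3)).symm]
  simp [Finset.sum_ite_eq]

lemma VV_zero (ℓ i : Fin 3) :
    VV ρ q₂₁ q₃₁ q₃₂ π ℓ 0 i = if i = ℓ then π i else 0 := by
  unfold VV wt cnt
  rw [← Equiv.sum_comp (Equiv.funUnique (Fin 1) (Fin 3)).symm]
  simp only [Equiv.funUnique_symm_apply]
  fin_cases i <;> fin_cases ℓ <;>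
    simp [Fin.sum_univ_three, Fin.isValue, Finset.filter_true_of_mem,
      Finset.filter_false_of_mem]

lemma UU_succ' (n : ℕ) (i : Fin 3) :
    UU ρ q₂₁ q₃₁ q₃₂ π (n + 1) i
      = ∑ x : Fin (n + 1) → Fin 3,
          wt ρ q₂₁ q₃₁ q₃₂ π n x * qMat ρ q₂₁ q₃₁ q₃₂ (x (Fin.last n)) i := by
  unfold UU
  rw [sum_snoc_eq]
  refine Finset.sum_congr rfl fun x _ => ?_
  simp only [Fin.snoc_last, wt_snoc]
  rw [Finset.sum_ite_eq' Finset.univ i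
    (fun j => wt ρ q₂₁ q₃₁ q₃₂ π n x * qMat ρ q₂₁ q₃₁ q₃₂ (x (Fin.last n)) j)]
  simp

lemma UU_succ (n : ℕ) (i : Fin 3) :
    UU ρ q₂₁ q₃₁ q₃₂ π (n + 1) i
      = ∑ j : Fin 3, UU ρ q₂₁ q₃₁ q₃₂ π n j * qMat ρ q₂₁ q₃₁ q₃₂ j i := by
  rw [UU_succ']
  exact (sum_ite_last n (wt ρ q₂₁ q₃₁ q₃₂ π n) (fun j => qMat ρ q₂₁ q₃₁ q₃₂ j i)).symm

lemma VV_succ (ℓ : Fin 3) (n : ℕ) (i : Fin 3) :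
    VV ρ q₂₁ q₃₁ q₃₂ π ℓ (n + 1) i
      = (∑ j : Fin 3, VV ρ q₂₁ q₃₁ q₃₂ π ℓ n j * qMat ρ q₂₁ q₃₁ q₃₂ j i)
        + (if i = ℓ then UU ρ q₂₁ q₃₁ q₃₂ π (n + 1) i else 0) := by
  unfold VV
  rw [sum_snoc_eq, UU_succ']
  have key : ∀ x : Fin (n + 1) → Fin 3,
      (∑ j : Fin 3, if (Fin.snoc x j : Fin (n+2) → Fin 3) (Fin.last (n+1)) = i then
          (cnt ℓ (n+1) (Fin.snoc x j) : ℝ) * wt ρ q₂₁ q₃₁ q₃₂ π (n+1) (Fin.snoc x j) else 0)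
      = ((cnt ℓ n x : ℝ) + if i = ℓ then 1 else 0)
          * (wt ρ q₂₁ q₃₁ q₃₂ π n x * qMat ρ q₂₁ q₃₁ q₃₂ (x (Fin.last n)) i) := by
    intro x
    simp only [Fin.snoc_last, cnt_snoc, wt_snoc]
    rw [Finset.sum_ite_eq' Finset.univ i (fun j =>
      ((cnt ℓ n x + if j = ℓ then 1 else 0 : ℕ) : ℝ)
        * (wt ρ q₂₁ q₃₁ q₃₂ π n x * qMat ρ q₂₁ q₃₁ q₃₂ (x (Fin.last n)) j))]
    push_cast
    simp
  rw [Finset.sum_congr rfl fun x _ => key x]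
  rw [sum_ite_last n (fun x => (cnt ℓ n x : ℝ) * wt ρ q₂₁ q₃₁ q₃₂ π n x)
    (fun j => qMat ρ q₂₁ q₃₁ q₃₂ j i)]
  by_cases h : i = ℓ <;> simp [h, add_mul, Finset.sum_add_distrib, Finset.mul_sum, mul_assoc]

lemma UU_closed (hρ : ρ ≠ 0) (n : ℕ) :
    UU ρ q₂₁ q₃₁ q₃₂ π n 2 = π 2 * ρ ^ n ∧
    UU ρ q₂₁ q₃₁ q₃₂ π n 1 = (π 1 + n * (π 2 * q₃₂ / ρ)) * ρ ^ n ∧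
    UU ρ q₂₁ q₃₁ q₃₂ π n 0 = (π 0 + n * ((π 1 * q₂₁ + π 2 * q₃₁) / ρ)
        + ((n : ℝ) * ((n : ℝ) - 1) / 2) * (π 2 * q₃₂ * q₂₁ / ρ ^ 2)) * ρ ^ n := by
  induction n with
  | zero => simp [UU_zero]
  | succ n ih =>
    obtain ⟨ih2, ih1, ih0⟩ := ih
    refine ⟨?_, ?_, ?_⟩
    · rw [UU_succ, Fin.sum_univ_three, ih2, ih1, ih0]
      simp [qMat]
      push_cast
      try field_simp
      ring
    · rw [UU_succ, Fin.sum_univ_three, ih2, ih1, ih0]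
      simp [qMat]
      push_cast
      try field_simp
      ring
    · rw [UU_succ, Fin.sum_univ_three, ih2, ih1, ih0]
      simp [qMat]
      push_cast
      try field_simp
      ring

lemma VV_closed₂ (hρ : ρ ≠ 0) (n : ℕ) :
    VV ρ q₂₁ q₃₁ q₃₂ π 2 n 2 = (((n : ℝ) + 1) * π 2) * ρ ^ n ∧
    VV ρ q₂₁ q₃₁ q₃₂ π 2 n 1 = ((n : ℝ) * ((n : ℝ) + 1) / 2 * (π 2 * q₃₂ / ρ)) * ρ ^ n ∧
    VV ρ q₂₁ q₃₁ q₃₂ π 2 n 0 = (((n : ℝ) - 1) * (n : ℝ) * ((n : ℝ) + 1) / 6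
        * (π 2 * q₃₂ * q₂₁ / ρ ^ 2)
        + (n : ℝ) * ((n : ℝ) + 1) / 2 * (π 2 * q₃₁ / ρ)) * ρ ^ n := by
  induction n with
  | zero => simp [VV_zero]
  | succ n ih =>
    obtain ⟨ih2, ih1, ih0⟩ := ih
    obtain ⟨hu2, hu1, hu0⟩ := UU_closed ρ q₂₁ q₃₁ q₃₂ π hρ (n + 1)
    refine ⟨?_, ?_, ?_⟩ <;>
    · rw [VV_succ, Fin.sum_univ_three, ih2, ih1, ih0]
      simp [qMat, hu2, hu1, hu0]
      try push_cast
      try field_simp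
      try ring

lemma VV_closed₁ (hρ : ρ ≠ 0) (n : ℕ) :
    VV ρ q₂₁ q₃₁ q₃₂ π 1 n 2 = 0 ∧
    VV ρ q₂₁ q₃₁ q₃₂ π 1 n 1 = (((n : ℝ) + 1) * π 1
        + (n : ℝ) * ((n : ℝ) + 1) / 2 * (π 2 * q₃₂ / ρ)) * ρ ^ n ∧
    VV ρ q₂₁ q₃₁ q₃₂ π 1 n 0 = ((n : ℝ) * ((n : ℝ) + 1) / 2 * (π 1 * q₂₁ / ρ)
        + ((n : ℝ) - 1) * (n : ℝ) * ((n : ℝ) + 1) / 6 * (π 2 * q₃₂ * q₂₁ / ρ ^ 2)) * ρ ^ n := by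
  induction n with
  | zero => simp [VV_zero]
  | succ n ih =>
    obtain ⟨ih2, ih1, ih0⟩ := ih
    obtain ⟨hu2, hu1, hu0⟩ := UU_closed ρ q₂₁ q₃₁ q₃₂ π hρ (n + 1)
    refine ⟨?_, ?_, ?_⟩ <;>
    · rw [VV_succ, Fin.sum_univ_three, ih2, ih1, ih0]
      simp [qMat, hu2, hu1, hu0]
      try push_cast
      try field_simp
      try ring

lemma VV_closed₀ (hρ : ρ ≠ 0) (n : ℕ) :
    VV ρ q₂₁ q₃₁ q₃₂ π 0 n 2 = 0 ∧
    VV ρ q₂₁ q₃₁ q₃₂ π 0 n 1 = 0 ∧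
    VV ρ q₂₁ q₃₁ q₃₂ π 0 n 0 = (((n : ℝ) + 1) * π 0
        + (n : ℝ) * ((n : ℝ) + 1) / 2 * ((π 1 * q₂₁ + π 2 * q₃₁) / ρ)
        + ((n : ℝ) - 1) * (n : ℝ) * ((n : ℝ) + 1) / 6 * (π 2 * q₃₂ * q₂₁ / ρ ^ 2)) * ρ ^ n := by
  induction n with
  | zero => simp [VV_zero]
  | succ n ih =>
    obtain ⟨ih2, ih1, ih0⟩ := ih
    obtain ⟨hu2, hu1, hu0⟩ := UU_closed ρ q₂₁ q₃₁ q₃₂ π hρ (n + 1)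
    refine ⟨?_, ?_, ?_⟩ <;>
    · rw [VV_succ, Fin.sum_univ_three, ih2, ih1, ih0]
      simp [qMat, hu2, hu1, hu0]
      try push_cast
      try field_simp
      try ring

noncomputable def eC (ℓ : Fin 3) : ℝ :=
  ![(π 1 * q₂₁ + π 2 * q₃₁) / (2 * ρ), (π 2 * q₃₂ + π 1 * q₂₁) / (2 * ρ),
    (π 2 * q₃₂ + π 2 * q₃₁) / (2 * ρ)] ℓ

lemma Dsum (hρ : ρ ≠ 0) (hsum : π 0 + π 1 + π 2 = 1) (n : ℕ) :
    ∑ x : Fin (n + 1) → Fin 3, wt ρ q₂₁ q₃₁ q₃₂ π n x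
      = ((π 2 * q₃₂ * q₂₁ / ρ ^ 2) * ((n : ℝ) * ((n : ℝ) - 1)) / 2
          + ((π 1 * q₂₁ + π 2 * q₃₁ + π 2 * q₃₂) / ρ) * n + 1) * ρ ^ n := by
  have h : ∑ x : Fin (n + 1) → Fin 3, wt ρ q₂₁ q₃₁ q₃₂ π n x
      = ∑ i : Fin 3, UU ρ q₂₁ q₃₁ q₃₂ π n i :=
    (sum_over_last n (wt ρ q₂₁ q₃₁ q₃₂ π n)).symm
  obtain ⟨hu2, hu1, hu0⟩ := UU_closed ρ q₂₁ q₃₁ q₃₂ π hρ n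
  rw [h, Fin.sum_univ_three, hu2, hu1, hu0]
  linear_combination (ρ ^ n) * hsum

lemma Nsum (hρ : ρ ≠ 0) (ℓ : Fin 3) (n : ℕ) :
    ∑ x : Fin (n + 1) → Fin 3, (cnt ℓ n x : ℝ) * wt ρ q₂₁ q₃₁ q₃₂ π n x
      = (((n : ℝ) + 1) * ((π 2 * q₃₂ * q₂₁ / ρ ^ 2) * ((n : ℝ) * ((n : ℝ) - 1)) / 6
          + eC ρ q₂₁ q₃₁ q₃₂ π ℓ * n + π ℓ)) * ρ ^ n := by
  have h : ∑ x : Fin (n + 1) → Fin 3, (cnt ℓ n x : ℝ) * wt ρ q₂₁ q₃₁ q₃₂ π n x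
      = ∑ i : Fin 3, VV ρ q₂₁ q₃₁ q₃₂ π ℓ n i :=
    (sum_over_last n (fun x => (cnt ℓ n x : ℝ) * wt ρ q₂₁ q₃₁ q₃₂ π n x)).symm
  rw [h, Fin.sum_univ_three]
  fin_cases ℓ <;>
    simp only [Fin.zero_eta, Fin.mk_one, Fin.reduceFinMk, Fin.isValue] <;> beta_reduce
  · obtain ⟨h2, h1, h0⟩ := VV_closed₀ ρ q₂₁ q₃₁ q₃₂ π hρ n
    rw [h2, h1, h0]; simp [eC]; try field_simp; try ring; try tauto
  · obtain ⟨h2, h1, h0⟩ := VV_closed₁ ρ q₂₁ q₃₁ q₃₂ π hρ n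
    rw [h2, h1, h0]; simp [eC]; try field_simp; try ring; try tauto
  · obtain ⟨h2, h1, h0⟩ := VV_closed₂ ρ q₂₁ q₃₁ q₃₂ π hρ n
    rw [h2, h1, h0]; simp [eC]; try field_simp; try ring; try tauto

lemma tendsto_final (a e f b : ℝ) (ha : 0 < a) :
    Tendsto (fun n : ℕ => (a * ((n : ℝ) * ((n : ℝ) - 1)) / 6 + e * n + f)
      / (a * ((n : ℝ) * ((n : ℝ) - 1)) / 2 + b * n + 1)) atTop (nhds (1 / 3)) := by
  have h1 : Tendsto (fun n : ℕ => (1 : ℝ) / n) atTop (nhds 0) :=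
    tendsto_one_div_atTop_nhds_zero_nat
  have cF : Continuous fun x : ℝ => a * (1 - x) / 6 + e * x + f * x ^ 2 := by continuity
  have cG : Continuous fun x : ℝ => a * (1 - x) / 2 + b * x + x ^ 2 := by continuity
  have hF : Tendsto (fun n : ℕ => a * (1 - 1 / (n : ℝ)) / 6 + e * (1 / n) + f * (1 / n) ^ 2)
      atTop (nhds (a / 6)) := by
    have := (cF.tendsto 0).comp h1
    simp only [Function.comp_def] at this
    convert this using 2 <;> norm_num
  have hG : Tendsto (fun n : ℕ => a * (1 - 1 / (n : ℝ)) / 2 + b * (1 / n) + (1 / n) ^ 2)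
      atTop (nhds (a / 2)) := by
    have := (cG.tendsto 0).comp h1
    simp only [Function.comp_def] at this
    convert this using 2 <;> norm_num
  have hQ := hF.div hG (by positivity)
  have hval : a / 6 / (a / 2) = 1 / 3 := by
    rw [div_div_div_comm, div_self ha.ne']
    norm_num
  rw [hval] at hQ
  refine hQ.congr' ?_
  filter_upwards [eventually_ge_atTop 1] with n hn
  have hn0 : (n : ℝ) ≠ 0 := Nat.cast_ne_zero.mpr (by omega)
  have e1 : a * (1 - 1 / (n : ℝ)) / 6 + e * (1 / n) + f * (1 / n) ^ 2
      = (a * ((n : ℝ) * ((n : ℝ) - 1)) / 6 + e * n + f) / (n : ℝ) ^ 2 := by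
    field_simp
  have e2 : a * (1 - 1 / (n : ℝ)) / 2 + b * (1 / n) + (1 / n) ^ 2
      = (a * ((n : ℝ) * ((n : ℝ) - 1)) / 2 + b * n + 1) / (n : ℝ) ^ 2 := by
    field_simp
  simp only [Pi.div_apply]
  rw [e1, e2, div_div_div_comm, div_self (pow_ne_zero 2 hn0), div_one]

lemma measure_decomp {Ω : Type*} [MeasurableSpace Ω] (ℙ : Measure Ω) [IsProbabilityMeasure ℙ]
    (X : ℕ → Ω → ℕ) (hmeas : ∀ m, Measurable (X m)) (hstate : ∀ m ω, X m ω ≤ 3)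
    (n : ℕ) (ℓ : Fin 3) :
    (ℙ {ω | ∀ m ≤ n, X m ω ≠ 0}).toReal
        = (∑ x : Fin (n + 1) → Fin 3,
            (ℙ {ω | ∀ m : Fin (n + 1), X m ω = (x m : ℕ) + 1}).toReal)
      ∧ (∫ ω in {ω | ∀ m ≤ n, X m ω ≠ 0},
            (((Finset.range (n + 1)).filter (fun m => X m ω = (ℓ : ℕ) + 1)).card : ℝ)
              / (n + 1) ∂ℙ)
        = ∑ x : Fin (n + 1) → Fin 3, ((cnt ℓ n x : ℝ) / (n + 1))
            * (ℙ {ω | ∀ m : Fin (n + 1), X m ω = (x m : ℕ) + 1}).toReal := by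
  set A : Set Ω := {ω | ∀ m ≤ n, X m ω ≠ 0} with hA
  set C : (Fin (n + 1) → Fin 3) → Set Ω :=
    fun x => {ω | ∀ m : Fin (n + 1), X m ω = (x m : ℕ) + 1} with hC
  have hCmeas : ∀ x, MeasurableSet (C x) := by
    intro x
    have : C x = ⋂ m : Fin (n + 1), (X m) ⁻¹' {(x m : ℕ) + 1} := by
      ext ω; simp [hC, Set.mem_iInter, Set.mem_preimage]
    rw [this]
    exact MeasurableSet.iInter fun m => hmeas m (measurableSet_singleton _)
  have hAmeas : MeasurableSet A := by
    have : A = ⋂ m : ℕ, ⋂ (_ : m ≤ n), (X m) ⁻¹' {0}ᶜ := by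
      ext ω; simp [hA, Set.mem_iInter, Set.mem_preimage]
    rw [this]
    exact MeasurableSet.iInter fun m => MeasurableSet.iInter fun _ =>
      (hmeas m (measurableSet_singleton 0)).compl
  have hCsub : ∀ x, C x ⊆ A := by
    intro x ω hω m hm
    have := hω ⟨m, Nat.lt_succ_of_le hm⟩
    simp only at this
    omega
  have hdisj : Pairwise (Function.onFun Disjoint C) := by
    intro x y hxy
    rw [Function.onFun, Set.disjoint_left]
    intro ω hx hy
    refine hxy (funext fun m => ?_)
    have h1 := hx m
    have h2 := hy m
    exact Fin.ext (by omega)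
  have hcup : A = ⋃ x, C x := by
    ext ω
    constructor
    · intro hω
      have hx : ∀ m : Fin (n + 1), X (m : ℕ) ω - 1 < 3 := by
        intro m
        have h1 := hstate (m : ℕ) ω
        have h2 := hω (m : ℕ) m.is_le
        omega
      refine Set.mem_iUnion.mpr ⟨fun m => ⟨X (m : ℕ) ω - 1, hx m⟩, fun m => ?_⟩
      have h2 := hω (m : ℕ) m.is_le
      simp only
      omega
    · intro hω
      obtain ⟨x, hx⟩ := Set.mem_iUnion.mp hω
      exact hCsub x hx
  constructor
  · rw [hcup, measure_iUnion hdisj hCmeas, tsum_fintype,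
      ENNReal.toReal_sum (fun x _ => measure_ne_top ℙ _)]
  · have hpt : ∀ ω, A.indicator
        (fun ω => (((Finset.range (n + 1)).filter
            (fun m => X m ω = (ℓ : ℕ) + 1)).card : ℝ) / (n + 1)) ω
        = ∑ x : Fin (n + 1) → Fin 3,
            (C x).indicator (fun _ => (cnt ℓ n x : ℝ) / (n + 1)) ω := by
      intro ω
      by_cases hω : ω ∈ A
      · rw [Set.indicator_of_mem hω]
        set x₀ : Fin (n + 1) → Fin 3 := fun m => ⟨X (m : ℕ) ω - 1, by
          have h1 := hstate (m : ℕ) ω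
          have h2 := hω (m : ℕ) m.is_le
          omega⟩ with hx₀
        have hωC : ω ∈ C x₀ := by
          intro m
          have h2 := hω (m : ℕ) m.is_le
          simp only [hx₀]
          omega
        rw [Finset.sum_eq_single x₀]
        · rw [Set.indicator_of_mem hωC]
          have hcard : ((Finset.range (n + 1)).filter (fun m => X m ω = (ℓ : ℕ) + 1)).card
              = cnt ℓ n x₀ := by
            unfold cnt
            rw [Finset.card_filter, Finset.card_filter,
              ← Fin.sum_univ_eq_sum_range
                (fun m => if X m ω = (ℓ : ℕ) + 1 then (1 : ℕ) else 0) (n + 1)]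
            refine Finset.sum_congr rfl fun m _ => ?_
            have h1 := hωC m
            have : (X (m : ℕ) ω = (ℓ : ℕ) + 1) ↔ (x₀ m = ℓ) := by
              rw [Fin.ext_iff]
              omega
            simp [this]
          rw [hcard]
        · intro y _ hy
          refine Set.indicator_of_notMem (fun hωy => hy ?_) _
          refine funext fun m => Fin.ext ?_
          have h1 := hωy m
          have h2 := hωC m
          omega
        · intro h
          exact absurd (Finset.mem_univ x₀) h
      · rw [Set.indicator_of_notMem hω]
        symm
        refine Finset.sum_eq_zero fun x _ => ?_
        exact Set.indicator_of_notMem (fun hωx => hω (hCsub x hωx)) _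
    rw [← integral_indicator hAmeas]
    rw [show (fun ω => A.indicator (fun ω => (((Finset.range (n + 1)).filter
        (fun m => X m ω = (ℓ : ℕ) + 1)).card : ℝ) / (n + 1)) ω)
      = fun ω => ∑ x : Fin (n + 1) → Fin 3,
          (C x).indicator (fun _ => (cnt ℓ n x : ℝ) / (n + 1)) ω from funext hpt]
    rw [integral_finset_sum _ (fun x _ => (integrable_const _).indicator (hCmeas x))]
    refine Finset.sum_congr rfl fun x _ => ?_
    rw [integral_indicator (hCmeas x), setIntegral_const, smul_eq_mul, mul_comm]
    rfl

end QE

/-- Let `0 < ρ < 1` and let `(X_i)` be the Markov chain on `{1,2,3}` (with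
absorbing state `0`) with lower triangular substochastic transition matrix `Q`
having diagonal `ρ` and subdiagonal entries `q₂₁ ≠ 0`, `q₃₂ ≠ 0`, `q₃₁` arbitrary.
Then for every initial distribution `π` with `π₃ > 0` and every `ℓ ∈ {1,2,3}`, the
quasi-ergodic limit
`lim_{n→∞} E_π[(1/(n+1))·#{m ≤ n : X_m = ℓ} | T > n] = 1/3`,
where `{T > n} = {∀ m ≤ n, X_m ≠ 0}` is the non-absorption event.  State
`ℓ ∈ {1,2,3}` is encoded as `(ℓ : Fin 3)` with numerical value `(ℓ : ℕ) + 1`. -/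
theorem quasi_ergodic_limit_three_states
    {Ω : Type*} [MeasurableSpace Ω] (ℙ : Measure Ω) [IsProbabilityMeasure ℙ]
    (ρ q₂₁ q₃₁ q₃₂ : ℝ)
    (hρ0 : 0 < ρ) (hρ1 : ρ < 1) (h21 : q₂₁ ≠ 0) (h32 : q₃₂ ≠ 0)
    (h21nonneg : 0 ≤ q₂₁) (h31nonneg : 0 ≤ q₃₁) (h32nonneg : 0 ≤ q₃₂)
    (hrow2 : q₂₁ + ρ ≤ 1) (hrow3 : q₃₁ + q₃₂ + ρ ≤ 1)
    (Q : Matrix (Fin 3) (Fin 3) ℝ)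
    (hQ : Q = !![ρ, 0, 0; q₂₁, ρ, 0; q₃₁, q₃₂, ρ])
    (π : Fin 3 → ℝ) (hπnonneg : ∀ i, 0 ≤ π i) (hπsum : ∑ i, π i = 1)
    (hπ3 : 0 < π 2)
    (X : ℕ → Ω → ℕ) (hmeas : ∀ m, Measurable (X m))
    (hstate : ∀ m ω, X m ω ≤ 3)
    (hMarkov : ∀ (n : ℕ) (x : Fin (n + 1) → Fin 3),
      (ℙ {ω | ∀ m : Fin (n + 1), X m ω = (x m : ℕ) + 1}).toReal
        = π (x 0) * ∏ m : Fin n, Q (x m.castSucc) (x m.succ))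
    (ℓ : Fin 3) :
    Tendsto (fun n : ℕ =>
        (∫ ω in {ω | ∀ m ≤ n, X m ω ≠ 0},
            (((Finset.range (n + 1)).filter (fun m => X m ω = (ℓ : ℕ) + 1)).card : ℝ)
              / (n + 1) ∂ℙ)
          / (ℙ {ω | ∀ m ≤ n, X m ω ≠ 0}).toReal)
      atTop (nhds (1 / 3)) := by
  have hρ : ρ ≠ 0 := hρ0.ne'
  have hq21 : 0 < q₂₁ := lt_of_le_of_ne h21nonneg (Ne.symm h21)
  have hq32 : 0 < q₃₂ := lt_of_le_of_ne h32nonneg (Ne.symm h32)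
  have hQm : Q = qMat ρ q₂₁ q₃₁ q₃₂ := hQ
  have hwt : ∀ (n : ℕ) (x : Fin (n + 1) → Fin 3),
      (ℙ {ω | ∀ m : Fin (n + 1), X m ω = (x m : ℕ) + 1}).toReal
        = wt ρ q₂₁ q₃₁ q₃₂ π n x := by
    intro n x
    have := hMarkov n x
    rw [hQm] at this
    exact this
  have hsum3 : π 0 + π 1 + π 2 = 1 := by
    have := hπsum
    rwa [Fin.sum_univ_three] at this
  set a : ℝ := π 2 * q₃₂ * q₂₁ / ρ ^ 2 with ha_def
  set b : ℝ := (π 1 * q₂₁ + π 2 * q₃₁ + π 2 * q₃₂) / ρ with hb_def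
  set e : ℝ := eC ρ q₂₁ q₃₁ q₃₂ π ℓ with he_def
  set f : ℝ := π ℓ with hf_def
  have ha : 0 < a := by positivity
  have key : ∀ n : ℕ,
      (∫ ω in {ω | ∀ m ≤ n, X m ω ≠ 0},
          (((Finset.range (n + 1)).filter (fun m => X m ω = (ℓ : ℕ) + 1)).card : ℝ)
            / (n + 1) ∂ℙ)
        / (ℙ {ω | ∀ m ≤ n, X m ω ≠ 0}).toReal
      = (a * ((n : ℝ) * ((n : ℝ) - 1)) / 6 + e * n + f)
          / (a * ((n : ℝ) * ((n : ℝ) - 1)) / 2 + b * n + 1) := by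
    intro n
    obtain ⟨hD, hI⟩ := measure_decomp ℙ X hmeas hstate n ℓ
    rw [hI, hD]
    simp only [hwt]
    have hn1 : ((n : ℝ) + 1) ≠ 0 := by positivity
    have hρn : ρ ^ n ≠ 0 := pow_ne_zero _ hρ
    have h1 : ∑ x : Fin (n + 1) → Fin 3,
        ((cnt ℓ n x : ℝ) / ((n : ℝ) + 1)) * wt ρ q₂₁ q₃₁ q₃₂ π n x
        = (∑ x : Fin (n + 1) → Fin 3, (cnt ℓ n x : ℝ) * wt ρ q₂₁ q₃₁ q₃₂ π n x)
            / ((n : ℝ) + 1) := by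
      rw [Finset.sum_div]
      exact Finset.sum_congr rfl fun x _ => div_mul_eq_mul_div _ _ _
    rw [h1, Nsum ρ q₂₁ q₃₁ q₃₂ π hρ ℓ n, Dsum ρ q₂₁ q₃₁ q₃₂ π hρ hsum3 n]
    have h2 : (((n : ℝ) + 1) * (a * ((n : ℝ) * ((n : ℝ) - 1)) / 6 + e * n + f)) * ρ ^ n
        / ((n : ℝ) + 1)
        = (a * ((n : ℝ) * ((n : ℝ) - 1)) / 6 + e * n + f) * ρ ^ n := by
      field_simp
    rw [h2, mul_div_mul_right _ _ hρn]
  exact Filter.Tendsto.congr (fun n => (key n).symm) (tendsto_final a e f b ha)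
end
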